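/- The improper integral ∫₁^∞ ( √(a² − 1) − a + 1/(2a) ) da converges and equals (1 − 2·log 2)/4. -/

import Mathlib

open Real MeasureTheory Filter

noncomputable def Faux (a : ℝ) : ℝ :=
  a * Real.sqrt (a^2 - 1) / 2 - Real.log (a + Real.sqrt (a^2 - 1)) / 2
    - a^2 / 2 + Real.log a / 2

lemma Faux_deriv {x : ℝ} (hx : x ∈ Set.Ioi (1:ℝ)) :
    HasDerivAt Faux (Real.sqrt (x^2 - 1) - x + 1/(2*x)) x := by
  simp only [Set.mem_Ioi] at hx
  have hx0 : (0:ℝ) < x := lt_trans one_pos hx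
  have hx2 : 0 < x^2 - 1 := by nlinarith
  have hspos : 0 < Real.sqrt (x^2 - 1) := Real.sqrt_pos.mpr hx2
  have hsne : Real.sqrt (x^2 - 1) ≠ 0 := ne_of_gt hspos
  have hs2 : Real.sqrt (x^2 - 1) ^ 2 = x^2 - 1 := Real.sq_sqrt hx2.le
  have hpoly : HasDerivAt (fun a : ℝ => a^2 - 1) (2*x) x := by
    simpa using ((hasDerivAt_pow 2 x).sub_const 1)
  have hs : HasDerivAt (fun a : ℝ => Real.sqrt (a^2 - 1))
      (x / Real.sqrt (x^2 - 1)) x := by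
    have := (Real.hasDerivAt_sqrt (ne_of_gt hx2)).comp x hpoly
    refine this.congr_deriv ?_
    field_simp
  have h1 : HasDerivAt (fun a : ℝ => a * Real.sqrt (a^2 - 1) / 2)
      ((Real.sqrt (x^2-1) + x * (x / Real.sqrt (x^2-1)))/2) x := by
    have := ((hasDerivAt_id x).mul hs).div_const 2
    simpa using this
  have hden : x + Real.sqrt (x^2 - 1) ≠ 0 := by positivity
  have h2 : HasDerivAt (fun a : ℝ => Real.log (a + Real.sqrt (a^2 - 1)) / 2)
      (((1 + x / Real.sqrt (x^2-1)) / (x + Real.sqrt (x^2-1)))/2) x :=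
    (((hasDerivAt_id x).add hs).log hden).div_const 2
  have h3 : HasDerivAt (fun a : ℝ => a^2/2) x x := by
    simpa using (hasDerivAt_pow 2 x).div_const 2
  have h4 : HasDerivAt (fun a : ℝ => Real.log a / 2) (1/(2*x)) x := by
    have := (Real.hasDerivAt_log (ne_of_gt hx0)).div_const 2
    refine this.congr_deriv ?_
    field_simp
  have hF := ((h1.sub h2).sub h3).add h4
  refine hF.congr_deriv ?_
  set s := Real.sqrt (x^2 - 1) with hsdef
  have e1 : (1 + x/s)/(x+s) = 1/s := by
    rw [div_eq_div_iff hden hsne]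
    field_simp
    ring
  have e2 : x * (x/s) = s + 1/s := by
    field_simp
    linear_combination -hs2
  rw [e1, e2]
  ring

lemma Faux_tendsto :
    Tendsto Faux atTop (nhds (-1/4 - Real.log 2 / 2)) := by
  set t : ℝ → ℝ := fun a => Real.sqrt (1 - (a^2)⁻¹) with htdef
  have ht : Tendsto t atTop (nhds 1) := by
    have h0 : Tendsto (fun a : ℝ => (a^2)⁻¹) atTop (nhds 0) := by
      have : Tendsto (fun a : ℝ => a^2) atTop atTop :=
        tendsto_pow_atTop (by norm_num)
      exact this.inv_tendsto_atTop
    have h1 : Tendsto (fun a : ℝ => 1 - (a^2)⁻¹) atTop (nhds 1) := by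
      simpa using tendsto_const_nhds.sub h0
    have := (Real.continuous_sqrt.tendsto 1).comp h1
    simpa [htdef, Function.comp_def] using this
  have hA : Tendsto (fun a => -1/(2*(t a + 1))) atTop (nhds (-1/4)) := by
    have h2 : Tendsto (fun a => 2*(t a + 1)) atTop (nhds 4) := by
      have := (ht.add_const 1).const_mul 2
      norm_num at this
      exact this
    have := h2.inv₀ (by norm_num)
    have := this.const_mul (-1)
    simpa [div_eq_mul_inv] using this
  have hB : Tendsto (fun a => Real.log (1 + t a)/2) atTop (nhds (Real.log 2/2)) := by
    have h1t : Tendsto (fun a => 1 + t a) atTop (nhds 2) := by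
      have := ht.const_add 1
      norm_num at this
      exact this
    have hlog := (Real.continuousAt_log (x := (2:ℝ)) (by norm_num)).tendsto
    exact (hlog.comp h1t).div_const 2
  have hg : Tendsto (fun a => -1/(2*(t a + 1)) - Real.log (1 + t a)/2)
      atTop (nhds (-1/4 - Real.log 2/2)) := hA.sub hB
  apply hg.congr' ?_
  filter_upwards [eventually_gt_atTop (1:ℝ)] with a ha
  have ha0 : (0:ℝ) < a := lt_trans one_pos ha
  have ha2 : 0 < a^2 - 1 := by nlinarith
  have htnn : 0 ≤ t a := Real.sqrt_nonneg _
  have hst : Real.sqrt (a^2 - 1) = a * t a := by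
    rw [htdef]
    rw [← Real.sqrt_sq ha0.le, ← Real.sqrt_mul (by positivity)]
    congr 1
    field_simp
    rw [Real.sq_sqrt (by positivity)]
  have ht1 : 0 < 1 + t a := by positivity
  have hs2 : (a * t a) ^ 2 = a^2 - 1 := by rw [← hst]; exact Real.sq_sqrt ha2.le
  have hlog : Real.log (a + Real.sqrt (a^2-1)) = Real.log a + Real.log (1 + t a) := by
    rw [hst, show a + a * t a = a * (1 + t a) by ring,
      Real.log_mul (ne_of_gt ha0) (ne_of_gt ht1)]
  have key : a^2 * t a / 2 - a^2/2 = -1/(2*(t a + 1)) := by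
    rw [eq_div_iff (by positivity)]
    linear_combination hs2
  simp only [Faux]
  rw [hlog, hst]
  linear_combination -key

lemma integrand_nonpos {x : ℝ} (hx : x ∈ Set.Ioi (1:ℝ)) :
    Real.sqrt (x^2 - 1) - x + 1/(2*x) ≤ 0 := by
  simp only [Set.mem_Ioi] at hx
  have hx0 : (0:ℝ) < x := lt_trans one_pos hx
  have hx2 : (0:ℝ) ≤ x^2 - 1 := by nlinarith
  have h : Real.sqrt (x^2 - 1) ≤ x - 1/(2*x) := by
    rw [show x - 1/(2*x) = Real.sqrt ((x - 1/(2*x))^2) from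
      (Real.sqrt_sq (by rw [sub_nonneg, div_le_iff₀ (by positivity)]; nlinarith)).symm]
    apply Real.sqrt_le_sqrt
    have hq : (x - 1/(2*x))^2 - (x^2 - 1) = 1/(4*x^2) := by field_simp; ring
    have hp : (0:ℝ) < 1/(4*x^2) := by positivity
    linarith
  linarith

lemma Faux_cont : ContinuousWithinAt Faux (Set.Ici 1) 1 := by
  have c1 : ContinuousAt (fun a:ℝ => Real.sqrt (a^2-1)) 1 :=
    (Real.continuous_sqrt.comp (by continuity)).continuousAt
  have c2 : ContinuousAt (fun a:ℝ => a + Real.sqrt (a^2-1)) 1 :=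
    continuousAt_id.add c1
  have c3 : ContinuousAt (fun a:ℝ => Real.log (a + Real.sqrt (a^2-1))) 1 :=
    c2.log (by norm_num)
  have c4 : ContinuousAt (fun a:ℝ => Real.log a) 1 := Real.continuousAt_log one_ne_zero
  have : ContinuousAt Faux 1 := by
    unfold Faux
    exact ((((continuousAt_id.mul c1).div_const 2).sub (c3.div_const 2)).sub
      (((continuousAt_id.pow 2).div_const 2))).add (c4.div_const 2)
  exact this.continuousWithinAt

theorem stmt15 :
    IntegrableOn (fun a : ℝ => Real.sqrt (a^2 - 1) - a + 1/(2*a)) (Set.Ioi 1) ∧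
    (∫ a in Set.Ioi (1:ℝ), (Real.sqrt (a^2 - 1) - a + 1/(2*a)))
      = (1 - 2*Real.log 2)/4 := by
  have hint : IntegrableOn (fun a : ℝ => -(Real.sqrt (a^2 - 1) - a + 1/(2*a)))
      (Set.Ioi 1) := by
    apply integrableOn_Ioi_deriv_of_nonneg (g := fun a => -Faux a)
      (l := -(-1/4 - Real.log 2/2))
    · exact Faux_cont.neg
    · exact fun x hx => (Faux_deriv hx).neg
    · exact fun x hx => neg_nonneg.mpr (integrand_nonpos hx)
    · exact Faux_tendsto.neg
  have hint' : IntegrableOn (fun a : ℝ => Real.sqrt (a^2 - 1) - a + 1/(2*a))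
      (Set.Ioi 1) := by
    exact integrable_neg_iff.mp hint
  refine ⟨hint', ?_⟩
  have hval := integral_Ioi_of_hasDerivAt_of_tendsto Faux_cont
    (fun x hx => Faux_deriv hx) hint' Faux_tendsto
  rw [hval]
  have hF1 : Faux 1 = -1/2 := by
    simp [Faux, show (1:ℝ)^2 - 1 = 0 by norm_num]
    norm_num
  rw [hF1]
  ring
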